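/- arXiv:2012.12656 — 6 statements merged into one kernel-verified Lean document; each statement's English description precedes it below -/
import Mathlib

section
/- Let 0 < r1 < r2 < ∞ and let f be an analytic function on A[r1,r2] with coefficients (a_n)_{n∈ℤ}. Then the function z ↦ Σ_{n∈ℤ} a_n z^n is analytic (locally expandable in a convergent power series, i.e. AnalyticAt in Mathlib's sense over the complete nontrivially normed field F) at every point z0 ∈ F with r1 < |z0| < r2. -/
open Filter Set

/-- `a` is the coefficient family of a Laurent series defining an analytic function on the
closed annulus `A[r1,r2]`. -/
def IsLaurentOn {F : Type*} [NontriviallyNormedField F] (a : ℤ → F) (r1 r2 : ℝ) : Prop :=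
  ∀ r : ℝ, r1 ≤ r → r ≤ r2 → Tendsto (fun n : ℤ => ‖a n‖ * r ^ n) cofinite (nhds 0)

/-- A power series with coefficients `c` whose terms `‖c n‖ R^n` tend to `0` defines an
analytic function at every point of norm `< R`. -/
lemma analyticAt_tsum_of_tendsto {F : Type*} [NontriviallyNormedField F] [CompleteSpace F]
    (c : ℕ → F) {R : ℝ} (hc : Tendsto (fun n : ℕ => ‖c n‖ * R ^ n) atTop (nhds 0))
    (x : F) (hx : ‖x‖ < R) :
    AnalyticAt F (fun z : F => ∑' n : ℕ, c n * z ^ n) x := by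
  have hR : 0 ≤ R := le_of_lt (lt_of_le_of_lt (norm_nonneg x) hx)
  set p := FormalMultilinearSeries.ofScalars F c with hp
  have hrad : (R.toNNReal : ENNReal) ≤ p.radius := by
    have hfun : (fun n : ℕ => ‖p n‖ * (R.toNNReal : ℝ) ^ n) = fun n : ℕ => ‖c n‖ * R ^ n := by
      funext n
      rw [hp, FormalMultilinearSeries.ofScalars_norm, Real.coe_toNNReal _ hR]
    exact p.le_radius_of_tendsto (l := 0) (hfun ▸ hc)
  have hx' : x ∈ Metric.eball (0 : F) p.radius := by
    rw [mem_emetric_ball_zero_iff]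
    refine lt_of_lt_of_le ?_ hrad
    rw [enorm_eq_nnnorm, ENNReal.coe_lt_coe, ← NNReal.coe_lt_coe, coe_nnnorm, Real.coe_toNNReal _ hR]
    exact hx
  have hpos : 0 < p.radius := lt_of_le_of_lt zero_le hx'
  have h := (p.hasFPowerSeriesOnBall hpos).analyticAt_of_mem hx'
  refine h.congr (Eventually.of_forall fun z => ?_)
  rw [FormalMultilinearSeries.sum]
  exact tsum_congr fun n => by
    rw [hp, FormalMultilinearSeries.ofScalars_apply_eq, smul_eq_mul]

/-- For an analytic function `f = Σ a_n z^n` on `A[r1,r2]` with `0 < r1 < r2 < ∞`, the function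
`z ↦ Σ_{n∈ℤ} a_n z^n` is analytic (in Mathlib's sense: locally expandable in a convergent power
series) at every point `z0` with `r1 < |z0| < r2`. -/
theorem statement2 {F : Type*} [NontriviallyNormedField F] [IsUltrametricDist F]
    [CompleteSpace F] (r1 r2 : ℝ) (h1 : 0 < r1) (h12 : r1 < r2)
    (a : ℤ → F) (ha : IsLaurentOn a r1 r2)
    (z0 : F) (hz1 : r1 < ‖z0‖) (hz2 : ‖z0‖ < r2) :
    AnalyticAt F (fun z : F => ∑' n : ℤ, a n * z ^ n) z0 := by
  classical
  have hz0 : z0 ≠ 0 := by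
    intro h; rw [h, norm_zero] at hz1; exact absurd hz1 (not_lt.2 h1.le)
  have hinj : Function.Injective ((↑) : ℕ → ℤ) := fun m n h => by omega
  -- coefficients of the two halves
  set cp : ℕ → F := fun n => a n with hcp
  set cm : ℕ → F := fun m => if m = 0 then 0 else a (-(m : ℤ)) with hcm
  have hnatcof : Tendsto (fun n : ℕ => (n : ℤ)) atTop cofinite := by
    rw [← Nat.cofinite_eq_atTop]
    exact hinj.tendsto_cofinite
  have hnegcof : Tendsto (fun n : ℕ => -(n : ℤ)) atTop cofinite := by
    rw [← Nat.cofinite_eq_atTop]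
    have hneg : Function.Injective fun n : ℕ => -(n : ℤ) := fun m n h => by
      simp only at h; omega
    exact hneg.tendsto_cofinite
  -- the positive part is analytic at z0
  have hplus : AnalyticAt F (fun z : F => ∑' n : ℕ, cp n * z ^ n) z0 := by
    refine analyticAt_tsum_of_tendsto cp (R := r2) ?_ z0 hz2
    have h2 := (ha r2 h12.le le_rfl).comp hnatcof
    refine h2.congr fun n => ?_
    simp [hcp, Function.comp, zpow_natCast]
  -- the negative part composed with inversion is analytic at z0
  have hminus : AnalyticAt F (fun z : F => ∑' m : ℕ, cm m * (z⁻¹) ^ m) z0 := by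
    have hinv : AnalyticAt F (fun z : F => z⁻¹) z0 := analyticAt_inv hz0
    have hg : AnalyticAt F (fun w : F => ∑' m : ℕ, cm m * w ^ m) z0⁻¹ := by
      refine analyticAt_tsum_of_tendsto cm (R := r1⁻¹) ?_ z0⁻¹ ?_
      · have h2 := (ha r1 le_rfl h12.le).comp hnegcof
        have h2' : Tendsto (fun n : ℕ => ‖a (-(n : ℤ))‖ * r1⁻¹ ^ n) atTop (nhds 0) := by
          refine h2.congr fun n => ?_
          simp [Function.comp, zpow_neg, zpow_natCast, inv_pow]
        refine h2'.congr' ?_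
        filter_upwards [eventually_ne_atTop 0] with n hn
        simp [hcm, hn]
      · rw [norm_inv]
        exact inv_strictAnti₀ h1 hz1
    exact hg.comp hinv
  have hsum := hplus.add hminus
  -- the original function agrees with the sum on the open annulus
  refine hsum.congr ?_
  have hUopen : IsOpen {z : F | r1 < ‖z‖ ∧ ‖z‖ < r2} := by
    have : {z : F | r1 < ‖z‖ ∧ ‖z‖ < r2} = (fun z : F => ‖z‖) ⁻¹' (Ioo r1 r2) := rfl
    rw [this]
    exact isOpen_Ioo.preimage continuous_norm
  have hUmem : {z : F | r1 < ‖z‖ ∧ ‖z‖ < r2} ∈ nhds z0 :=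
    hUopen.mem_nhds ⟨hz1, hz2⟩
  filter_upwards [hUmem] with z hz
  obtain ⟨hzl, hzr⟩ := hz
  -- summability of the full Laurent series at z
  have hS : Summable (fun n : ℤ => a n * z ^ n) := by
    apply NonarchimedeanAddGroup.summable_of_tendsto_cofinite_zero
    rw [tendsto_zero_iff_norm_tendsto_zero]
    have := ha ‖z‖ hzl.le hzr.le
    refine this.congr fun n => ?_
    rw [norm_mul, norm_zpow]
  have hS1 : Summable (fun n : ℕ => a n * z ^ (n : ℤ)) :=
    hS.comp_injective hinj
  have hS2 : Summable (fun m : ℕ => a (-((m : ℤ) + 1)) * z ^ (-((m : ℤ) + 1))) := by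
    have : Function.Injective (fun m : ℕ => -((m : ℤ) + 1)) := fun m n h => by
      simp only at h; omega
    exact hS.comp_injective this
  -- key identity for the negative-part terms
  have key : ∀ m : ℕ, a (-((m : ℤ) + 1)) * z ^ (-((m : ℤ) + 1)) = cm (m + 1) * (z⁻¹) ^ (m + 1) := by
    intro m
    have h1 : -((m : ℤ) + 1) = -(((m + 1 : ℕ) : ℤ)) := by push_cast; ring
    rw [h1, zpow_neg, zpow_natCast, ← inv_pow]
    simp [hcm]
  -- split the ℤ-tsum
  have hsplit := tsum_of_nat_of_neg_add_one (f := fun n : ℤ => a n * z ^ n) hS1 hS2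
  simp only [Pi.add_apply]
  rw [hsplit]
  congr 1
  · exact tsum_congr fun n => by simp [hcp, zpow_natCast]
  · -- shifted negative part equals ∑' m, cm m * (z⁻¹)^m
    have hsm : Summable (fun m : ℕ => cm m * (z⁻¹) ^ m) := by
      rw [← summable_nat_add_iff 1]
      exact hS2.congr fun m => key m
    rw [Summable.tsum_eq_zero_add hsm]
    have h0 : cm 0 * (z⁻¹) ^ 0 = 0 := by simp [hcm]
    rw [h0, zero_add]
    exact tsum_congr fun m => (key m).symm
end

section
/- (Logarithmic Derivative Lemma, analytic case.) Let 0 < r1 ≤ r2 < ∞, let f be an analytic function on A[r1,r2] with coefficients (a_n)_{n∈ℤ}, and let k ≥ 1 be an integer. Then the termwise k-th derivative f^{(k)}(z) = Σ_{n∈ℤ} n(n−1)⋯(n−k+1) a_n z^{n−k} (where the integer n(n−1)⋯(n−k+1) acts via the canonical ring map ℤ → F) is again an analytic function on A[r1,r2], and for every r ∈ [r1,r2] one has |f^{(k)}|_r = sup_{n∈ℤ} |n(n−1)⋯(n−k+1) · a_n| r^{n−k} ≤ |f|_r / r^k; in particular |d^k f / f|_r ≤ 1/r^k whenever f ≠ 0.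 -/
open Filter Set

/-- The Gauss norm `|f|_r = sup_{n ∈ ℤ} |a_n| r^n`. -/
noncomputable def gaussNorm {F : Type*} [NontriviallyNormedField F] (a : ℤ → F) (r : ℝ) : ℝ :=
  sSup (Set.range fun n : ℤ => ‖a n‖ * r ^ n)

/-- The coefficients of the termwise `k`-th derivative
`f^{(k)}(z) = Σ_n n(n-1)⋯(n-k+1) a_n z^{n-k}`, reindexed by `m = n - k`: the coefficient of
`z^m` is `(∏_{j<k} (m+k-j)) · a_{m+k}`, the integers acting via the canonical map `ℤ → F`. -/
noncomputable def derivCoeff {F : Type*} [NontriviallyNormedField F] (a : ℤ → F) (k : ℕ) :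
    ℤ → F :=
  fun m : ℤ => (∏ j ∈ Finset.range k, ((m + k - j : ℤ) : F)) * a (m + k)

lemma bddAbove_of_tendsto_cofinite (f : ℤ → ℝ) (hf : Tendsto f cofinite (nhds 0)) :
    BddAbove (Set.range f) := by
  have hfin : {n : ℤ | f n ∉ Set.Iio 1}.Finite := by
    have h2 : (f ⁻¹' Set.Iio 1)ᶜ.Finite := hf (Iio_mem_nhds (show (0:ℝ) < 1 by norm_num))
    exact h2
  have hsub : Set.range f ⊆ (f '' {n : ℤ | f n ∉ Set.Iio 1}) ∪ Set.Iio 1 := by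
    rintro x ⟨n, rfl⟩
    by_cases h : f n ∈ Set.Iio 1
    · exact Or.inr h
    · exact Or.inl ⟨n, h, rfl⟩
  exact BddAbove.mono hsub ((hfin.image f).bddAbove.union (bddAbove_Iio))

lemma derivCoeff_term_le {F : Type*} [NontriviallyNormedField F] [IsUltrametricDist F]
    (a : ℤ → F) (k : ℕ) (r : ℝ) (hr : 0 < r) (m : ℤ) :
    ‖derivCoeff a k m‖ * r ^ m ≤ (‖a (m + k)‖ * r ^ (m + (k : ℤ))) / r ^ k := by
  have hnorm : ‖derivCoeff a k m‖ ≤ ‖a (m + k)‖ := by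
    rw [derivCoeff, norm_mul]
    calc ‖∏ j ∈ Finset.range k, ((m + k - j : ℤ) : F)‖ * ‖a (m + k)‖
        ≤ 1 * ‖a (m + k)‖ := by
          apply mul_le_mul_of_nonneg_right _ (norm_nonneg _)
          rw [norm_prod]
          exact Finset.prod_le_one (fun j _ => norm_nonneg _)
            (fun j _ => IsUltrametricDist.norm_intCast_le_one F _)
      _ = ‖a (m + k)‖ := one_mul _
  have hrk : (0:ℝ) < r ^ k := pow_pos hr k
  have heq : (‖a (m + k)‖ * r ^ (m + (k : ℤ))) / r ^ k = ‖a (m + k)‖ * r ^ m := by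
    rw [zpow_add₀ (ne_of_gt hr), zpow_natCast]
    field_simp
  rw [heq]
  exact mul_le_mul_of_nonneg_right hnorm (le_of_lt (zpow_pos hr m))

/-- Logarithmic Derivative Lemma, analytic case: for `f` analytic on `A[r1,r2]`
(`0 < r1 ≤ r2 < ∞`) and `k ≥ 1`, the termwise `k`-th derivative `f^{(k)}` is again analytic on
`A[r1,r2]`, its Gauss norm satisfies `|f^{(k)}|_r ≤ |f|_r / r^k` for every `r ∈ [r1,r2]`, and
in particular `|d^k f / f|_r = |f^{(k)}|_r / |f|_r ≤ 1/r^k` whenever `f ≠ 0`. -/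
theorem statement4 {F : Type*} [NontriviallyNormedField F] [IsUltrametricDist F]
    [CompleteSpace F] (r1 r2 : ℝ) (h1 : 0 < r1) (h12 : r1 ≤ r2)
    (a : ℤ → F) (ha : IsLaurentOn a r1 r2) (k : ℕ) (hk : 1 ≤ k) :
    IsLaurentOn (derivCoeff a k) r1 r2 ∧
      (∀ r : ℝ, r1 ≤ r → r ≤ r2 →
        gaussNorm (derivCoeff a k) r ≤ gaussNorm a r / r ^ k) ∧
      ((∃ n : ℤ, a n ≠ 0) → ∀ r : ℝ, r1 ≤ r → r ≤ r2 →
        gaussNorm (derivCoeff a k) r / gaussNorm a r ≤ 1 / r ^ k) := by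
  have key : ∀ r : ℝ, r1 ≤ r → r ≤ r2 →
      gaussNorm (derivCoeff a k) r ≤ gaussNorm a r / r ^ k := by
    intro r hr1 hr2
    have hr : 0 < r := lt_of_lt_of_le h1 hr1
    have hbdd : BddAbove (Set.range fun n : ℤ => ‖a n‖ * r ^ n) :=
      bddAbove_of_tendsto_cofinite _ (ha r hr1 hr2)
    apply csSup_le (Set.range_nonempty _)
    rintro x ⟨m, rfl⟩
    refine le_trans (derivCoeff_term_le a k r hr m) ?_
    apply div_le_div_of_nonneg_right _ (pow_pos hr k).le
    exact le_csSup hbdd ⟨m + k, rfl⟩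
  refine ⟨?_, key, ?_⟩
  · intro r hr1 hr2
    have hr : 0 < r := lt_of_lt_of_le h1 hr1
    have hshift : Tendsto (fun m : ℤ => ‖a (m + k)‖ * r ^ (m + (k:ℤ))) cofinite (nhds 0) := by
      have hinj : Function.Injective (fun m : ℤ => m + (k:ℤ)) := fun x y h => by
        simpa using h
      exact (ha r hr1 hr2).comp hinj.tendsto_cofinite
    have hlim : Tendsto (fun m : ℤ => (‖a (m + k)‖ * r ^ (m + (k:ℤ))) / r ^ k)
        cofinite (nhds 0) := by
      simpa using hshift.div_const (r ^ k)
    refine squeeze_zero (fun m => mul_nonneg (norm_nonneg _) (le_of_lt (zpow_pos hr m)))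
      (fun m => derivCoeff_term_le a k r hr m) hlim
  · rintro ⟨n, hn⟩ r hr1 hr2
    have hr : 0 < r := lt_of_lt_of_le h1 hr1
    have hbdd : BddAbove (Set.range fun n : ℤ => ‖a n‖ * r ^ n) :=
      bddAbove_of_tendsto_cofinite _ (ha r hr1 hr2)
    have hpos : 0 < gaussNorm a r := by
      have : (0:ℝ) < ‖a n‖ * r ^ n :=
        mul_pos (norm_pos_iff.mpr hn) (zpow_pos hr n)
      exact lt_of_lt_of_le this (le_csSup hbdd ⟨n, rfl⟩)
    have hle := key r hr1 hr2
    have h2 : gaussNorm (derivCoeff a k) r * r ^ k ≤ gaussNorm a r :=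
      (le_div_iff₀ (pow_pos hr k)).mp hle
    rw [div_le_div_iff₀ hpos (pow_pos hr k), one_mul]
    exact h2
end

section
/- (Logarithmic Derivative Lemma, meromorphic case in Wronskian form.) Let 0 < r1 ≤ r2 < ∞ and let f, g be analytic functions on A[r1,r2], with termwise derivatives f′, g′ and Cauchy products taken coefficientwise. Then for every r ∈ [r1,r2] one has |f′g − fg′|_r ≤ |f|_r |g|_r / r. Equivalently, for the meromorphic function h = f/g (g ≠ 0) one has |h′/h|_r ≤ 1/r, where |f/g|_r := |f|_r / |g|_r. -/
open Filter Set

/-- The coefficients of the termwise derivative `f′(z) = Σ_n n·a_n z^{n-1}`, reindexed: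
the coefficient of `z^m` is `(m+1)·a_{m+1}`, the integer acting via `ℤ → F`. -/
noncomputable def derivCoeff₁ {F : Type*} [NontriviallyNormedField F] (a : ℤ → F) : ℤ → F :=
  fun m : ℤ => ((m + 1 : ℤ) : F) * a (m + 1)

/-- The coefficients of the Cauchy product `fg`: `c_n = Σ_{i∈ℤ} a_i b_{n-i}`. -/
noncomputable def cauchyProd {F : Type*} [NontriviallyNormedField F] (a b : ℤ → F) : ℤ → F :=
  fun n : ℤ => ∑' i : ℤ, a i * b (n - i)


private lemma gaussNorm_nonneg' {F : Type*} [NontriviallyNormedField F] (a : ℤ → F) (r : ℝ)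
    (hr : 0 < r) : 0 ≤ gaussNorm a r := by
  refine Real.sSup_nonneg ?_
  rintro x ⟨n, rfl⟩
  exact mul_nonneg (norm_nonneg _) (zpow_pos hr n).le

/-- Logarithmic Derivative Lemma, meromorphic case in Wronskian form: for `f, g` analytic on
`A[r1,r2]` (`0 < r1 ≤ r2 < ∞`), with termwise derivatives and coefficientwise Cauchy products,
one has `|f′g − fg′|_r ≤ |f|_r |g|_r / r` for every `r ∈ [r1,r2]`; equivalently, for the
meromorphic function `h = f/g` (`g ≠ 0`, with `|f/g|_r := |f|_r / |g|_r`) one has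
`|h′/h|_r = |f′g − fg′|_r / (|f|_r |g|_r) ≤ 1/r`. -/
theorem statement5 {F : Type*} [NontriviallyNormedField F] [IsUltrametricDist F]
    [CompleteSpace F] (r1 r2 : ℝ) (h1 : 0 < r1) (h12 : r1 ≤ r2)
    (a b : ℤ → F) (ha : IsLaurentOn a r1 r2) (hb : IsLaurentOn b r1 r2) :
    (∀ r : ℝ, r1 ≤ r → r ≤ r2 →
      gaussNorm (fun n : ℤ => cauchyProd (derivCoeff₁ a) b n - cauchyProd a (derivCoeff₁ b) n) r
        ≤ gaussNorm a r * gaussNorm b r / r) ∧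
    ((∃ n : ℤ, b n ≠ 0) → ∀ r : ℝ, r1 ≤ r → r ≤ r2 →
      gaussNorm (fun n : ℤ => cauchyProd (derivCoeff₁ a) b n - cauchyProd a (derivCoeff₁ b) n) r
          / (gaussNorm a r * gaussNorm b r)
        ≤ 1 / r) := by
  have main : ∀ r : ℝ, r1 ≤ r → r ≤ r2 →
    gaussNorm (fun n : ℤ => cauchyProd (derivCoeff₁ a) b n - cauchyProd a (derivCoeff₁ b) n) r
      ≤ gaussNorm a r * gaussNorm b r / r := by
    intro r hr1 hr2
    have hr : 0 < r := lt_of_lt_of_le h1 hr1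
    have hrne : r ≠ 0 := hr.ne'
    have hA : ∀ n : ℤ, ‖a n‖ * r ^ n ≤ gaussNorm a r := fun n =>
      le_csSup (ha r hr1 hr2).bddAbove_range_of_cofinite ⟨n, rfl⟩
    have hB : ∀ n : ℤ, ‖b n‖ * r ^ n ≤ gaussNorm b r := fun n =>
      le_csSup (hb r hr1 hr2).bddAbove_range_of_cofinite ⟨n, rfl⟩
    have hA0 : 0 ≤ gaussNorm a r := gaussNorm_nonneg' a r hr
    have hB0 : 0 ≤ gaussNorm b r := gaussNorm_nonneg' b r hr
    have hAB0 : 0 ≤ gaussNorm a r * gaussNorm b r := mul_nonneg hA0 hB0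
    have key : ∀ (i j : ℤ), ‖a i‖ * ‖b j‖ ≤ gaussNorm a r * gaussNorm b r / r ^ (i + j) := by
      intro i j
      rw [le_div_iff₀ (zpow_pos hr _), zpow_add₀ hrne]
      calc ‖a i‖ * ‖b j‖ * (r ^ i * r ^ j) = (‖a i‖ * r ^ i) * (‖b j‖ * r ^ j) := by ring
        _ ≤ gaussNorm a r * gaussNorm b r :=
          mul_le_mul (hA i) (hB j) (mul_nonneg (norm_nonneg _) (zpow_pos hr _).le) hA0
    refine Real.sSup_le ?_ (div_nonneg hAB0 hr.le)
    rintro x ⟨n, rfl⟩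
    dsimp only
    have hCn : (0:ℝ) ≤ gaussNorm a r * gaussNorm b r / r ^ (n + 1) :=
      div_nonneg hAB0 (zpow_pos hr _).le
    have e1 : ‖cauchyProd (derivCoeff₁ a) b n‖ ≤ gaussNorm a r * gaussNorm b r / r ^ (n + 1) := by
      refine IsUltrametricDist.norm_tsum_le_of_forall_le_of_nonneg hCn (fun i => ?_)
      have h' : ‖derivCoeff₁ a i * b (n - i)‖ ≤ ‖a (i + 1)‖ * ‖b (n - i)‖ := by
        rw [derivCoeff₁, norm_mul, norm_mul]
        exact mul_le_mul_of_nonneg_right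
          (mul_le_of_le_one_left (norm_nonneg _) (IsUltrametricDist.norm_intCast_le_one F _))
          (norm_nonneg _)
      refine h'.trans ?_
      have h'' := key (i + 1) (n - i)
      rwa [show i + 1 + (n - i) = n + 1 by ring] at h''
    have e2 : ‖cauchyProd a (derivCoeff₁ b) n‖ ≤ gaussNorm a r * gaussNorm b r / r ^ (n + 1) := by
      refine IsUltrametricDist.norm_tsum_le_of_forall_le_of_nonneg hCn (fun i => ?_)
      have h' : ‖a i * derivCoeff₁ b (n - i)‖ ≤ ‖a i‖ * ‖b (n - i + 1)‖ := by
        rw [derivCoeff₁, norm_mul, norm_mul]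
        refine mul_le_mul_of_nonneg_left ?_ (norm_nonneg _)
        exact mul_le_of_le_one_left (norm_nonneg _) (IsUltrametricDist.norm_intCast_le_one F _)
      refine h'.trans ?_
      have h'' := key i (n - i + 1)
      rwa [show i + (n - i + 1) = n + 1 by ring] at h''
    have e3 : ‖cauchyProd (derivCoeff₁ a) b n - cauchyProd a (derivCoeff₁ b) n‖
        ≤ gaussNorm a r * gaussNorm b r / r ^ (n + 1) := by
      rw [sub_eq_add_neg]
      refine (IsUltrametricDist.norm_add_le_max _ _).trans (max_le e1 ?_)
      rwa [norm_neg]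
    calc ‖cauchyProd (derivCoeff₁ a) b n - cauchyProd a (derivCoeff₁ b) n‖ * r ^ n
        ≤ gaussNorm a r * gaussNorm b r / r ^ (n + 1) * r ^ n :=
          mul_le_mul_of_nonneg_right e3 (zpow_pos hr _).le
      _ = gaussNorm a r * gaussNorm b r / r := by
          rw [zpow_add_one₀ hrne]
          field_simp
  refine ⟨main, fun _ r hr1 hr2 => ?_⟩
  have hr : 0 < r := lt_of_lt_of_le h1 hr1
  have hAB0 : 0 ≤ gaussNorm a r * gaussNorm b r :=
    mul_nonneg (gaussNorm_nonneg' a r hr) (gaussNorm_nonneg' b r hr)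
  rcases eq_or_lt_of_le hAB0 with h | h
  · rw [← h, div_zero]
    positivity
  · rw [div_le_div_iff₀ h hr, one_mul]
    exact (le_div_iff₀ hr).mp (main r hr1 hr2)
end

section
/- Let 0 < r1 ≤ r2 < ∞ and let f be a nonzero analytic function on A[r1,r2]. Then for all r, R with r1 ≤ r < R ≤ r2 one has k_f(r) ≤ K_f(r) ≤ k_f(R) ≤ K_f(R); in particular the function t ↦ K_f(t) is nondecreasing on [r1,r2]. -/
open Filter Set

/-- For a nonzero analytic function `f` on `A[r1,r2]` (`0 < r1 ≤ r2 < ∞`), with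
`k_f(r) = min{n : |a_n| r^n = |f|_r}` and `K_f(r) = max{n : |a_n| r^n = |f|_r}`, one has
`k_f(r) ≤ K_f(r) ≤ k_f(R) ≤ K_f(R)` for all `r1 ≤ r < R ≤ r2`; in particular `t ↦ K_f(t)` is
nondecreasing on `[r1,r2]`. -/
theorem statement6 {F : Type*} [NontriviallyNormedField F] [IsUltrametricDist F]
    [CompleteSpace F] (r1 r2 : ℝ) (h1 : 0 < r1) (h12 : r1 ≤ r2)
    (a : ℤ → F) (ha : IsLaurentOn a r1 r2) (hne : ∃ n : ℤ, a n ≠ 0)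
    (kf Kf : ℝ → ℤ)
    (hk : ∀ r : ℝ, r1 ≤ r → r ≤ r2 →
      IsLeast {n : ℤ | ‖a n‖ * r ^ n = gaussNorm a r} (kf r))
    (hK : ∀ r : ℝ, r1 ≤ r → r ≤ r2 →
      IsGreatest {n : ℤ | ‖a n‖ * r ^ n = gaussNorm a r} (Kf r)) :
    (∀ r R : ℝ, r1 ≤ r → r < R → R ≤ r2 →
      kf r ≤ Kf r ∧ Kf r ≤ kf R ∧ kf R ≤ Kf R) ∧
    MonotoneOn Kf (Set.Icc r1 r2) := by
  -- basic facts about the Gauss norm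
  have hbdd : ∀ r : ℝ, r1 ≤ r → r ≤ r2 →
      BddAbove (Set.range fun n : ℤ => ‖a n‖ * r ^ n) :=
    fun r hr hr2 => (ha r hr hr2).bddAbove_range_of_cofinite
  have hle : ∀ r : ℝ, r1 ≤ r → r ≤ r2 → ∀ n : ℤ, ‖a n‖ * r ^ n ≤ gaussNorm a r :=
    fun r hr hr2 n => le_csSup (hbdd r hr hr2) (Set.mem_range_self n)
  have hpos : ∀ r : ℝ, r1 ≤ r → r ≤ r2 → 0 < gaussNorm a r := by
    intro r hr hr2
    obtain ⟨n, hn⟩ := hne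
    have hrpos : (0:ℝ) < r := lt_of_lt_of_le h1 hr
    have : (0:ℝ) < ‖a n‖ * r ^ n :=
      mul_pos (norm_pos_iff.mpr hn) (zpow_pos hrpos n)
    exact lt_of_lt_of_le this (hle r hr hr2 n)
  -- the key step : Kf r ≤ kf R for r < R
  have key : ∀ r R : ℝ, r1 ≤ r → r < R → R ≤ r2 → Kf r ≤ kf R := by
    intro r R hr hrR hR2
    have hr2 : r ≤ r2 := le_trans (le_of_lt hrR) hR2
    have hR1 : r1 ≤ R := le_trans hr (le_of_lt hrR)
    have hrpos : (0:ℝ) < r := lt_of_lt_of_le h1 hr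
    have hRpos : (0:ℝ) < R := lt_trans hrpos hrR
    set n := Kf r
    set m := kf R
    have hnmem : ‖a n‖ * r ^ n = gaussNorm a r := (hK r hr hr2).1
    have hmmem : ‖a m‖ * R ^ m = gaussNorm a R := (hk R hR1 hR2).1
    have hAn : (0:ℝ) < ‖a n‖ := by
      by_contra h
      push_neg at h
      have : ‖a n‖ = 0 := le_antisymm h (norm_nonneg _)
      rw [this, zero_mul] at hnmem
      exact absurd hnmem.symm (ne_of_gt (hpos r hr hr2))
    have hAm : (0:ℝ) < ‖a m‖ := by
      by_contra h
      push_neg at h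
      have : ‖a m‖ = 0 := le_antisymm h (norm_nonneg _)
      rw [this, zero_mul] at hmmem
      exact absurd hmmem.symm (ne_of_gt (hpos R hR1 hR2))
    have h1' : ‖a n‖ * R ^ n ≤ ‖a m‖ * R ^ m := by
      rw [hmmem]; exact hle R hR1 hR2 n
    have h2' : ‖a m‖ * r ^ m ≤ ‖a n‖ * r ^ n := by
      rw [hnmem]; exact hle r hr hr2 m
    -- multiply the two inequalities and cancel the positive norms
    have hmul : (‖a n‖ * R ^ n) * (‖a m‖ * r ^ m) ≤ (‖a m‖ * R ^ m) * (‖a n‖ * r ^ n) :=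
      mul_le_mul h1' h2' (mul_nonneg (norm_nonneg _) (zpow_pos hrpos m).le)
        (mul_nonneg (norm_nonneg _) (zpow_pos hRpos m).le)
    have hcancel : R ^ n * r ^ m ≤ R ^ m * r ^ n := by
      have h' : (‖a n‖ * ‖a m‖) * (R ^ n * r ^ m) ≤ (‖a n‖ * ‖a m‖) * (R ^ m * r ^ n) := by
        nlinarith [hmul]
      exact le_of_mul_le_mul_left h' (mul_pos hAn hAm)
    -- rewrite as (R/r)^n ≤ (R/r)^m
    have hdiv : (R / r) ^ n ≤ (R / r) ^ m := by
      rw [div_zpow, div_zpow, div_le_div_iff₀ (zpow_pos hrpos n) (zpow_pos hrpos m)]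
      linarith [hcancel]
    have hb : 1 < R / r := (one_lt_div hrpos).mpr hrR
    exact (zpow_le_zpow_iff_right₀ hb).mp hdiv
  constructor
  · intro r R hr hrR hR2
    have hr2 : r ≤ r2 := le_trans (le_of_lt hrR) hR2
    have hR1 : r1 ≤ R := le_trans hr (le_of_lt hrR)
    exact ⟨(hk r hr hr2).2 (hK r hr hr2).1, key r R hr hrR hR2,
      (hK R hR1 hR2).2 (hk R hR1 hR2).1⟩
  · intro r hrmem R hRmem hrR
    rcases eq_or_lt_of_le hrR with h | h
    · rw [h]
    · exact le_trans (key r R hrmem.1 h hRmem.2)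
        ((hK R hRmem.1 hRmem.2).2 (hk R hRmem.1 hRmem.2).1)
end

section
/- (Non-archimedean Poisson–Jensen formula.) Let 0 < r1 ≤ r2 < ∞ and let f be a nonzero analytic function on A[r1,r2]. Then for all r, R with r1 ≤ r ≤ R ≤ r2, the function t ↦ K_f(t)/t is integrable on [r,R] and log |f|_R − log |f|_r = ∫_r^R K_f(t) dt/t. -/
open Filter Set

open scoped Topology

/-- Non-archimedean Poisson–Jensen formula: for a nonzero analytic function `f` on `A[r1,r2]`
(`0 < r1 ≤ r2 < ∞`), with `K_f(t) = max{n : |a_n| t^n = |f|_t}`, and any `r1 ≤ r ≤ R ≤ r2`,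
the function `t ↦ K_f(t)/t` is integrable on `[r,R]` and
`log |f|_R − log |f|_r = ∫_r^R K_f(t) dt/t`. -/
theorem statement7 {F : Type*} [NontriviallyNormedField F] [IsUltrametricDist F]
    [CompleteSpace F] (r1 r2 : ℝ) (h1 : 0 < r1) (h12 : r1 ≤ r2)
    (a : ℤ → F) (ha : IsLaurentOn a r1 r2) (hne : ∃ n : ℤ, a n ≠ 0)
    (Kf : ℝ → ℤ)
    (hK : ∀ t : ℝ, r1 ≤ t → t ≤ r2 →
      IsGreatest {n : ℤ | ‖a n‖ * t ^ n = gaussNorm a t} (Kf t))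
    (r R : ℝ) (hr : r1 ≤ r) (hrR : r ≤ R) (hR : R ≤ r2) :
    IntervalIntegrable (fun t : ℝ => (Kf t : ℝ) / t) MeasureTheory.volume r R ∧
      Real.log (gaussNorm a R) - Real.log (gaussNorm a r)
        = ∫ t in r..R, (Kf t : ℝ) / t := by
  classical
  obtain ⟨n0, hn0⟩ := hne
  set g : ℝ → ℝ := fun t => Real.log (gaussNorm a t) with hgdef
  -- basic facts
  have hbdd : ∀ t : ℝ, r1 ≤ t → t ≤ r2 →
      BddAbove (Set.range fun n : ℤ => ‖a n‖ * t ^ n) :=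
    fun t h h' => (ha t h h').bddAbove_range_of_cofinite
  have hle : ∀ t : ℝ, r1 ≤ t → t ≤ r2 → ∀ n : ℤ, ‖a n‖ * t ^ n ≤ gaussNorm a t :=
    fun t h h' n => le_csSup (hbdd t h h') ⟨n, rfl⟩
  have hpos : ∀ t : ℝ, r1 ≤ t → t ≤ r2 → 0 < gaussNorm a t := by
    intro t h h'
    have ht : 0 < t := lt_of_lt_of_le h1 h
    have : 0 < ‖a n0‖ * t ^ n0 := mul_pos (norm_pos_iff.mpr hn0) (zpow_pos ht n0)
    exact lt_of_lt_of_le this (hle t h h' n0)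
  have hKa : ∀ t : ℝ, r1 ≤ t → t ≤ r2 → ‖a (Kf t)‖ * t ^ (Kf t) = gaussNorm a t :=
    fun t h h' => (hK t h h').1
  have hKne : ∀ t : ℝ, r1 ≤ t → t ≤ r2 → ‖a (Kf t)‖ ≠ 0 := by
    intro t h h' hz
    have h0 := hKa t h h'
    rw [hz, zero_mul] at h0
    exact (hpos t h h').ne' h0.symm
  -- the key inequality
  have hM : ∀ t, r1 ≤ t → t ≤ r2 → ∀ s, r1 ≤ s → s ≤ r2 →
      g t + (Kf t : ℝ) * (Real.log s - Real.log t) ≤ g s := by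
    intro t htl htr s hsl hsr
    have ht : 0 < t := h1.trans_le htl
    have hs : 0 < s := h1.trans_le hsl
    have hna : ‖a (Kf t)‖ ≠ 0 := hKne t htl htr
    have e1 : g t = Real.log ‖a (Kf t)‖ + (Kf t : ℝ) * Real.log t := by
      show Real.log (gaussNorm a t) = _
      rw [← hKa t htl htr, Real.log_mul hna (zpow_ne_zero _ ht.ne'), Real.log_zpow]
    have e2 : Real.log ‖a (Kf t)‖ + (Kf t : ℝ) * Real.log s ≤ g s := by
      have hb := hle s hsl hsr (Kf t)
      have hposn : 0 < ‖a (Kf t)‖ * s ^ (Kf t) :=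
        mul_pos (lt_of_le_of_ne (norm_nonneg _) (Ne.symm hna)) (zpow_pos hs _)
      calc Real.log ‖a (Kf t)‖ + (Kf t : ℝ) * Real.log s
          = Real.log (‖a (Kf t)‖ * s ^ (Kf t)) := by
            rw [Real.log_mul hna (zpow_ne_zero _ hs.ne'), Real.log_zpow]
        _ ≤ g s := Real.log_le_log hposn hb
    linarith
  -- sandwich, upper form
  have hM2 : ∀ t, r1 ≤ t → t ≤ r2 → ∀ s, r1 ≤ s → s ≤ r2 →
      g s - g t ≤ (Kf s : ℝ) * (Real.log s - Real.log t) := by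
    intro t htl htr s hsl hsr
    have B := hM s hsl hsr t htl htr
    have hrw : (Kf s : ℝ) * (Real.log t - Real.log s)
        = -((Kf s : ℝ) * (Real.log s - Real.log t)) := by ring
    rw [hrw] at B
    linarith
  -- monotonicity of Kf
  have hmono : ∀ t, r1 ≤ t → ∀ s, t ≤ s → s ≤ r2 → Kf t ≤ Kf s := by
    intro t htl s hts hsr
    rcases eq_or_lt_of_le hts with rfl | hlt
    · exact le_rfl
    have htr : t ≤ r2 := hts.trans hsr
    have hsl : r1 ≤ s := htl.trans hts
    have hΔ : 0 < Real.log s - Real.log t :=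
      sub_pos.mpr (Real.log_lt_log (h1.trans_le htl) hlt)
    have A := hM t htl htr s hsl hsr
    have B := hM2 t htl htr s hsl hsr
    have h3 : (Kf t : ℝ) * (Real.log s - Real.log t)
        ≤ (Kf s : ℝ) * (Real.log s - Real.log t) := by linarith
    have h4 := le_of_mul_le_mul_right h3 hΔ
    exact_mod_cast h4
  -- equality when Kf is constant
  have hconst : ∀ t, r1 ≤ t → ∀ s, t ≤ s → s ≤ r2 → Kf t = Kf s →
      g s - g t = (Kf t : ℝ) * (Real.log s - Real.log t) := by
    intro t htl s hts hsr hKeq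
    have htr : t ≤ r2 := hts.trans hsr
    have hsl : r1 ≤ s := htl.trans hts
    have A := hM t htl htr s hsl hsr
    have B := hM2 t htl htr s hsl hsr
    rw [← hKeq] at B
    linarith
  -- right local constancy of Kf
  have hright : ∀ x, r1 ≤ x → x < r2 →
      ∃ t0, x < t0 ∧ t0 ≤ r2 ∧ ∀ t, x < t → t ≤ t0 → Kf t = Kf x := by
    intro x hxl hxr
    have hxpos : 0 < x := h1.trans_le hxl
    obtain ⟨m, ⟨t0, ht0, hmt0⟩, hmin⟩ :=
      Int.exists_least_of_bdd (P := fun m : ℤ => ∃ t, t ∈ Set.Ioc x r2 ∧ Kf t = m)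
        ⟨Kf x, by
          rintro z ⟨t, ht, rfl⟩
          exact hmono x hxl t ht.1.le ht.2⟩
        ⟨Kf r2, r2, ⟨hxr, le_rfl⟩, rfl⟩
    have hconstm : ∀ t, x < t → t ≤ t0 → Kf t = m := by
      intro t hxt htt0
      have hA : Kf t ≤ Kf t0 := hmono t (hxl.trans hxt.le) t0 htt0 ht0.2
      have hB : m ≤ Kf t := hmin _ ⟨t, ⟨hxt, htt0.trans ht0.2⟩, rfl⟩
      omega
    by_cases hmx : m = Kf x
    · exact ⟨t0, ht0.1, ht0.2, fun t h h' => (hconstm t h h').trans hmx⟩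
    · exfalso
      set n := Kf x with hn
      have hxm : Kf x ≤ m := hmt0 ▸ hmono x hxl t0 ht0.1.le ht0.2
      have hcont : Tendsto (fun t : ℝ => ‖a m‖ * t ^ m - ‖a n‖ * t ^ n) (𝓝[>] x)
          (𝓝 (‖a m‖ * x ^ m - ‖a n‖ * x ^ n)) := by
        apply Tendsto.mono_left ?_ nhdsWithin_le_nhds
        exact ((continuousAt_const.mul (continuousAt_zpow₀ x m (Or.inl hxpos.ne'))).sub
          (continuousAt_const.mul (continuousAt_zpow₀ x n (Or.inl hxpos.ne'))))
      have hev : ∀ᶠ t in 𝓝[>] x, (0:ℝ) ≤ ‖a m‖ * t ^ m - ‖a n‖ * t ^ n := by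
        filter_upwards [Ioc_mem_nhdsGT ht0.1] with t ht
        have htl : r1 ≤ t := hxl.trans ht.1.le
        have htr : t ≤ r2 := ht.2.trans ht0.2
        have h5 : ‖a m‖ * t ^ m = gaussNorm a t := by
          rw [← hconstm t ht.1 ht.2]
          exact hKa t htl htr
        have h6 := hle t htl htr n
        linarith
      have h8 : (0:ℝ) ≤ ‖a m‖ * x ^ m - ‖a n‖ * x ^ n := ge_of_tendsto hcont hev
      have h7 : ‖a m‖ * x ^ m = gaussNorm a x := by
        refine le_antisymm (hle x hxl hxr.le m) ?_
        rw [← hKa x hxl hxr.le]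
        linarith
      have h9 : m ≤ Kf x := (hK x hxl hxr.le).2 h7
      omega
  -- integrability
  have hKmonoIcc : MonotoneOn (fun t => (Kf t : ℝ)) (Set.uIcc r R) := by
    rw [Set.uIcc_of_le hrR]
    intro s hs t ht hst
    show ((Kf s : ℝ)) ≤ ((Kf t : ℝ))
    exact_mod_cast hmono s (hr.trans hs.1) t hst (ht.2.trans hR)
  have hint : IntervalIntegrable (fun t : ℝ => (Kf t : ℝ) / t) MeasureTheory.volume r R := by
    have hi1 := hKmonoIcc.intervalIntegrable (μ := MeasureTheory.volume)
    have hi2 : ContinuousOn (fun t : ℝ => t⁻¹) (Set.uIcc r R) := by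
      apply ContinuousOn.inv₀ continuousOn_id
      intro t ht
      rw [Set.uIcc_of_le hrR] at ht
      exact (h1.trans_le (hr.trans ht.1)).ne'
    simpa [div_eq_mul_inv] using hi1.mul_continuousOn hi2
  refine ⟨hint, ?_⟩
  -- continuity of g on [r, R]
  set C : ℝ := max |(Kf r : ℝ)| |(Kf R : ℝ)| with hCdef
  have hCbound : ∀ x ∈ Set.Icc r R, ∀ t ∈ Set.Icc r R,
      |g t - g x| ≤ C * |Real.log t - Real.log x| := by
    have main : ∀ x ∈ Set.Icc r R, ∀ t ∈ Set.Icc r R, x ≤ t →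
        |g t - g x| ≤ C * |Real.log t - Real.log x| := by
      intro x hx t ht hxt
      have hxl : r1 ≤ x := hr.trans hx.1
      have hxr2 : x ≤ r2 := hx.2.trans hR
      have htl : r1 ≤ t := hr.trans ht.1
      have htr2 : t ≤ r2 := ht.2.trans hR
      have hΔ : 0 ≤ Real.log t - Real.log x :=
        sub_nonneg.mpr (Real.log_le_log (h1.trans_le hxl) hxt)
      have A := hM x hxl hxr2 t htl htr2
      have B := hM2 x hxl hxr2 t htl htr2
      have hKx : (Kf r : ℝ) ≤ (Kf x : ℝ) := by
        exact_mod_cast hmono r hr x hx.1 hxr2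
      have hKt : (Kf t : ℝ) ≤ (Kf R : ℝ) := by
        exact_mod_cast hmono t htl R ht.2 hR
      have hC1 : -C ≤ (Kf r : ℝ) :=
        neg_le.mp (le_trans (neg_le_abs _) (le_max_left _ _))
      have hC2 : (Kf R : ℝ) ≤ C := (le_abs_self _).trans (le_max_right _ _)
      have e3 : -C * (Real.log t - Real.log x) ≤ (Kf x : ℝ) * (Real.log t - Real.log x) :=
        mul_le_mul_of_nonneg_right (hC1.trans hKx) hΔ
      have e4 : (Kf t : ℝ) * (Real.log t - Real.log x) ≤ C * (Real.log t - Real.log x) :=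
        mul_le_mul_of_nonneg_right (hKt.trans hC2) hΔ
      rw [abs_of_nonneg hΔ, abs_le]
      constructor <;> nlinarith
    intro x hx t ht
    rcases le_total x t with h | h
    · exact main x hx t ht h
    · rw [abs_sub_comm (g t), abs_sub_comm (Real.log t)]
      exact main t ht x hx h
  have hgcont : ContinuousOn g (Set.Icc r R) := by
    intro x hx
    have hxpos : 0 < x := h1.trans_le (hr.trans hx.1)
    have hlog : Tendsto (fun t => C * |Real.log t - Real.log x|) (𝓝[Set.Icc r R] x) (𝓝 0) := by
      have hc : ContinuousAt (fun t => C * |Real.log t - Real.log x|) x := by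
        exact (continuousAt_const.mul
          (((Real.continuousAt_log hxpos.ne').sub continuousAt_const).abs))
      have := hc.continuousWithinAt (s := Set.Icc r R)
      simpa [ContinuousWithinAt] using this
    show Tendsto g (𝓝[Set.Icc r R] x) (𝓝 (g x))
    rw [tendsto_iff_dist_tendsto_zero]
    apply squeeze_zero' (Filter.Eventually.of_forall fun t => dist_nonneg) ?_ hlog
    filter_upwards [self_mem_nhdsWithin] with t ht
    rw [Real.dist_eq]
    exact hCbound x hx t ht
  -- right derivative of g
  have hderiv : ∀ x ∈ Set.Ioo r R, HasDerivWithinAt g ((Kf x : ℝ) / x) (Set.Ioi x) x := by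
    intro x hx
    have hxl : r1 ≤ x := hr.trans hx.1.le
    have hxr2 : x < r2 := hx.2.trans_le hR
    have hxpos : 0 < x := h1.trans_le hxl
    obtain ⟨t0, hxt0, ht0r2, hKconst⟩ := hright x hxl hxr2
    have hφ : HasDerivWithinAt
        (fun t => (Kf x : ℝ) * Real.log t + (g x - (Kf x : ℝ) * Real.log x))
        ((Kf x : ℝ) / x) (Set.Ioi x) x := by
      have hd := ((Real.hasDerivAt_log hxpos.ne').const_mul ((Kf x : ℝ))).add_const
        (g x - (Kf x : ℝ) * Real.log x)
      have : (Kf x : ℝ) * x⁻¹ = (Kf x : ℝ) / x := (div_eq_mul_inv _ _).symm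
      rw [this] at hd
      exact hd.hasDerivWithinAt
    apply hφ.congr_of_eventuallyEq ?_ (by ring)
    filter_upwards [Ioc_mem_nhdsGT hxt0] with t ht
    have heq := hconst x hxl t ht.1.le (ht.2.trans ht0r2) (hKconst t ht.1 ht.2).symm
    have : g t = g x + (Kf x : ℝ) * (Real.log t - Real.log x) := by linarith
    rw [this]; ring
  have := intervalIntegral.integral_eq_sub_of_hasDeriv_right_of_le hrR hgcont hderiv hint
  rw [this]
end

section
/- (First Main Theorem for analytic functions on A[r1,∞).) Let r1 > 0 and let f be an analytic function on A[r1,∞), i.e. a Laurent series Σ_{n∈ℤ} a_n z^n such that |a_n| r^n → 0 as n → ±∞ for every r ≥ r1. Let a ∈ F be such that f − a (the series with constant coefficient a_0 − a and the same other coefficients) is not the zero series. Define for r ≥ r1: the characteristic function T_f(r) := max(0, log |f|_r), the proximity function m_f(a,r) := max(0, −log |f−a|_r), and the counting function N_f(a,r) := ∫_{r1}^r (K_{f−a}(t) − k_{f−a}(r1)) dt/t, where K_{f−a}(t) − k_{f−a}(r1) is the number of zeros of f − a in the annulus A[r1,t] counted with multiplicity. Then there exists a constant C > 0 such that |T_f(r)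 − m_f(a,r) − N_f(a,r)| ≤ C · log r for all r ≥ max(r1, 2); that is, T_f(r) = m_f(a,r) + N_f(a,r) + O(log r). -/
open Filter Set

private lemma zpowKey {s t : ℝ} (hs : 0 < s) (A : ℝ) (p : ℤ) :
    A * t ^ p = (A * s ^ p) * (t / s) ^ p := by
  rw [mul_assoc, ← mul_zpow]
  congr 2
  field_simp

private lemma cmpUp {A B s t : ℝ} {p q : ℤ} (hs : 0 < s) (hst : s ≤ t) (hpq : p ≤ q)
    (hB : 0 ≤ B) (h : A * s ^ p ≤ B * s ^ q) : A * t ^ p ≤ B * t ^ q := by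
  have h1 : (1:ℝ) ≤ t / s := (one_le_div hs).2 hst
  calc A * t ^ p = (A * s ^ p) * (t / s) ^ p := zpowKey hs A p
    _ ≤ (B * s ^ q) * (t / s) ^ p :=
        mul_le_mul_of_nonneg_right h (zpow_nonneg (by linarith) _)
    _ ≤ (B * s ^ q) * (t / s) ^ q :=
        mul_le_mul_of_nonneg_left (zpow_le_zpow_right₀ h1 hpq)
          (mul_nonneg hB (zpow_nonneg hs.le _))
    _ = B * t ^ q := (zpowKey hs B q).symm

private lemma cmpUpStrict {A B s t : ℝ} {p q : ℤ} (hs : 0 < s) (hst : s < t) (hpq : p < q)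
    (hB : 0 < B) (h : A * s ^ p ≤ B * s ^ q) : A * t ^ p < B * t ^ q := by
  have h1 : (1:ℝ) < t / s := (one_lt_div hs).2 hst
  calc A * t ^ p = (A * s ^ p) * (t / s) ^ p := zpowKey hs A p
    _ ≤ (B * s ^ q) * (t / s) ^ p :=
        mul_le_mul_of_nonneg_right h (zpow_nonneg (by linarith) _)
    _ < (B * s ^ q) * (t / s) ^ q :=
        mul_lt_mul_of_pos_left (zpow_lt_zpow_right₀ h1 hpq)
          (mul_pos hB (zpow_pos hs _))
    _ = B * t ^ q := (zpowKey hs B q).symm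

private lemma cmpDown {A B s t : ℝ} {p q : ℤ} (hs : 0 < s) (hst : s ≤ t) (hqp : q ≤ p)
    (hB : 0 ≤ B) (h : A * t ^ p ≤ B * t ^ q) : A * s ^ p ≤ B * s ^ q := by
  have ht : 0 < t := hs.trans_le hst
  have h1 : (1:ℝ) ≤ t / s := (one_le_div hs).2 hst
  have e : ∀ (C : ℝ) (m : ℤ), C * s ^ m = (C * t ^ m) * (t / s) ^ (-m) := by
    intro C m
    rw [zpow_neg, mul_assoc]
    congr 1
    rw [div_zpow]
    field_simp
  calc A * s ^ p = (A * t ^ p) * (t / s) ^ (-p) := e A p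
    _ ≤ (B * t ^ q) * (t / s) ^ (-p) :=
        mul_le_mul_of_nonneg_right h (zpow_nonneg (by linarith) _)
    _ ≤ (B * t ^ q) * (t / s) ^ (-q) :=
        mul_le_mul_of_nonneg_left (zpow_le_zpow_right₀ h1 (by omega))
          (mul_nonneg hB (zpow_nonneg ht.le _))
    _ = B * s ^ q := (e B q).symm

private lemma cmpDownStrict {A B s t : ℝ} {p q : ℤ} (hs : 0 < s) (hst : s < t) (hqp : q < p)
    (hB : 0 < B) (h : A * t ^ p ≤ B * t ^ q) : A * s ^ p < B * s ^ q := by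
  have ht : 0 < t := hs.trans hst
  have h1 : (1:ℝ) < t / s := (one_lt_div hs).2 hst
  have e : ∀ (C : ℝ) (m : ℤ), C * s ^ m = (C * t ^ m) * (t / s) ^ (-m) := by
    intro C m
    rw [zpow_neg, mul_assoc]
    congr 1
    rw [div_zpow]
    field_simp
  calc A * s ^ p = (A * t ^ p) * (t / s) ^ (-p) := e A p
    _ ≤ (B * t ^ q) * (t / s) ^ (-p) :=
        mul_le_mul_of_nonneg_right h (zpow_nonneg (by linarith) _)
    _ < (B * t ^ q) * (t / s) ^ (-q) :=
        mul_lt_mul_of_pos_left (zpow_lt_zpow_right₀ h1 (by omega))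
          (mul_pos hB (zpow_pos ht _))
    _ = B * s ^ q := (e B q).symm

private lemma max0log {x : ℝ} (hx : 0 ≤ x) : max 0 (Real.log x) = Real.log (max 1 x) := by
  rcases le_total 1 x with h | h
  · rw [max_eq_right h, max_eq_right (Real.log_nonneg h)]
  · rw [max_eq_left h, Real.log_one, max_eq_left (Real.log_nonpos hx h)]

/-- `a` is the coefficient family of a Laurent series defining an analytic function on the
unbounded annulus `A[r1,∞) = {z : |z| ≥ r1}`: for every `r ≥ r1`, the terms `|a n| r^n` tend
to `0` as `|n| → ∞`. -/
def IsLaurentOnRay {F : Type*} [NontriviallyNormedField F] (a : ℤ → F) (r1 : ℝ) : Prop :=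
  ∀ r : ℝ, r1 ≤ r → Tendsto (fun n : ℤ => ‖a n‖ * r ^ n) cofinite (nhds 0)

/-- The coefficients of `f - c`: the constant coefficient becomes `a 0 - c`, the others are
unchanged. -/
def subConst {F : Type*} [NontriviallyNormedField F] (a : ℤ → F) (c : F) : ℤ → F :=
  fun n : ℤ => if n = 0 then a 0 - c else a n

/-- First Main Theorem for analytic functions on `A[r1,∞)`, `r1 > 0`: for `f = Σ a_n z^n`
analytic on `A[r1,∞)` and `c ∈ F` with `f - c` not the zero series, writing
`T_f(r) = max(0, log |f|_r)`, `m_f(c,r) = max(0, −log |f−c|_r)`, and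
`N_f(c,r) = ∫_{r1}^r (K_{f−c}(t) − k_{f−c}(r1)) dt/t` (the counting function for the zeros of
`f − c`, where `K_{f−c}(t) = max{n : |b_n| t^n = |f−c|_t}` and
`k_{f−c}(r1) = min{n : |b_n| r1^n = |f−c|_{r1}}` for the coefficients `b` of `f−c`),
there is `C > 0` with `|T_f(r) − m_f(c,r) − N_f(c,r)| ≤ C·log r` for all `r ≥ max(r1,2)`,
i.e. `T_f(r) = m_f(c,r) + N_f(c,r) + O(log r)`. -/
theorem statement10 {F : Type*} [NontriviallyNormedField F] [IsUltrametricDist F]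
    [CompleteSpace F] (r1 : ℝ) (h1 : 0 < r1)
    (a : ℤ → F) (ha : IsLaurentOnRay a r1)
    (c : F) (hne : ∃ n : ℤ, subConst a c n ≠ 0)
    (Kf : ℝ → ℤ)
    (hKf : ∀ t : ℝ, r1 ≤ t →
      IsGreatest {n : ℤ | ‖subConst a c n‖ * t ^ n = gaussNorm (subConst a c) t} (Kf t))
    (k1 : ℤ)
    (hk1 : IsLeast {n : ℤ | ‖subConst a c n‖ * r1 ^ n = gaussNorm (subConst a c) r1} k1) :
    ∃ C : ℝ, 0 < C ∧ ∀ r : ℝ, max r1 2 ≤ r →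
      |max 0 (Real.log (gaussNorm a r))
          - max 0 (-Real.log (gaussNorm (subConst a c) r))
          - ∫ t in r1..r, ((Kf t - k1 : ℤ) : ℝ) / t|
        ≤ C * Real.log r := by
  classical
  set b : ℤ → F := subConst a c with hbdef
  have hbeq : ∀ n : ℤ, n ≠ 0 → b n = a n := by
    intro n hn; simp [hbdef, subConst, hn]
  have hb : IsLaurentOnRay b r1 := by
    intro r hr
    refine Filter.Tendsto.congr' ?_ (ha r hr)
    filter_upwards [(Set.finite_singleton (0:ℤ)).compl_mem_cofinite] with n hn
    have hn0 : n ≠ 0 := by simpa using hn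
    rw [hbeq n hn0]
  have hbddb : ∀ t, r1 ≤ t → BddAbove (range fun n : ℤ => ‖b n‖ * t ^ n) :=
    fun t ht => (hb t ht).bddAbove_range_of_cofinite
  have hbdda : ∀ t, r1 ≤ t → BddAbove (range fun n : ℤ => ‖a n‖ * t ^ n) :=
    fun t ht => (ha t ht).bddAbove_range_of_cofinite
  have leG : ∀ t, r1 ≤ t → ∀ n : ℤ, ‖b n‖ * t ^ n ≤ gaussNorm b t :=
    fun t ht n => le_csSup (hbddb t ht) ⟨n, rfl⟩
  have leGa : ∀ t, r1 ≤ t → ∀ n : ℤ, ‖a n‖ * t ^ n ≤ gaussNorm a t :=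
    fun t ht n => le_csSup (hbdda t ht) ⟨n, rfl⟩
  obtain ⟨m0, hm0⟩ := hne
  have hGr1 : 0 < gaussNorm b r1 :=
    lt_of_lt_of_le (mul_pos (norm_pos_iff.2 hm0) (zpow_pos h1 _)) (leG r1 le_rfl m0)
  have hk1mem : ‖b k1‖ * r1 ^ k1 = gaussNorm b r1 := hk1.1
  have hbk1pos : 0 < ‖b k1‖ := by
    by_contra h
    push_neg at h
    have : ‖b k1‖ = 0 := le_antisymm h (norm_nonneg _)
    rw [this, zero_mul] at hk1mem
    exact hGr1.ne hk1mem
  have Gpos : ∀ t, r1 ≤ t → 0 < gaussNorm b t := fun t ht =>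
    lt_of_lt_of_le (mul_pos hbk1pos (zpow_pos (h1.trans_le ht) _)) (leG t ht k1)
  have hKmem : ∀ t, r1 ≤ t → ‖b (Kf t)‖ * t ^ (Kf t) = gaussNorm b t :=
    fun t ht => (hKf t ht).1
  have hbKt : ∀ t, r1 ≤ t → 0 < ‖b (Kf t)‖ := by
    intro t ht
    by_contra h
    push_neg at h
    have h0 : ‖b (Kf t)‖ = 0 := le_antisymm h (norm_nonneg _)
    have := hKmem t ht
    rw [h0, zero_mul] at this
    exact (Gpos t ht).ne this
  have Kmono : ∀ s t : ℝ, r1 ≤ s → s ≤ t → Kf s ≤ Kf t := by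
    intro s t hs hst
    rcases eq_or_lt_of_le hst with rfl | hlt
    · exact le_rfl
    by_contra hq
    push_neg at hq
    have ht1 : r1 ≤ t := hs.trans hst
    have hle_t : ‖b (Kf s)‖ * t ^ (Kf s) ≤ ‖b (Kf t)‖ * t ^ (Kf t) := by
      rw [hKmem t ht1]; exact leG t ht1 _
    have hstrict := cmpDownStrict (h1.trans_le hs) hlt hq (hbKt t ht1) hle_t
    rw [hKmem s hs] at hstrict
    exact lt_irrefl _ (hstrict.trans_le (leG s hs (Kf t)))
  have k1leK : ∀ t, r1 ≤ t → k1 ≤ Kf t := by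
    intro t ht
    rcases eq_or_lt_of_le ht with rfl | hlt
    · exact (hKf r1 le_rfl).2 hk1.1
    · by_contra hq
      push_neg at hq
      have h0 : ‖b (Kf t)‖ * r1 ^ (Kf t) ≤ ‖b k1‖ * r1 ^ k1 := by
        rw [hk1mem]; exact leG r1 le_rfl _
      have hstrict := cmpUpStrict h1 hlt hq hbk1pos h0
      rw [hKmem t ht] at hstrict
      exact lt_irrefl _ (hstrict.trans_le (leG t ht k1))
  -- integrability of the counting integrand
  have hIntKf : ∀ R, r1 ≤ R →
      IntervalIntegrable (fun t => (Kf t : ℝ) / t) MeasureTheory.volume r1 R := by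
    intro R hR
    have hmono : MonotoneOn (fun t => (Kf t : ℝ)) (uIcc r1 R) := by
      rw [uIcc_of_le hR]
      intro s hs t ht hst
      show (Kf s : ℝ) ≤ (Kf t : ℝ)
      exact_mod_cast Kmono s t hs.1 hst
    have hint1 : IntervalIntegrable (fun t => (Kf t : ℝ)) MeasureTheory.volume r1 R :=
      hmono.intervalIntegrable
    have hinv : ContinuousOn (fun t : ℝ => t⁻¹) (uIcc r1 R) := by
      rw [uIcc_of_le hR]
      exact ContinuousOn.inv₀ continuousOn_id (fun t ht => (h1.trans_le ht.1).ne')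
    simpa [div_eq_mul_inv] using hint1.mul_continuousOn hinv
  -- the key Jensen-type identity
  have key : ∀ R, r1 ≤ R → (∫ t in r1..R, (Kf t : ℝ) / t) =
      Real.log (gaussNorm b R) - Real.log (gaussNorm b r1) := by
    intro R hR
    set S : Finset ℤ := (Finset.Icc k1 (Kf R)).filter (fun n => b n ≠ 0) with hS
    have hk1S : k1 ∈ S := by
      simp only [hS, Finset.mem_filter, Finset.mem_Icc]
      exact ⟨⟨le_rfl, k1leK R hR⟩, fun h => hbk1pos.ne' (by simp [h])⟩
    have hSne : S.Nonempty := ⟨k1, hk1S⟩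
    have hKtS : ∀ t, r1 ≤ t → t ≤ R → Kf t ∈ S := by
      intro t ht htR
      simp only [hS, Finset.mem_filter, Finset.mem_Icc]
      exact ⟨⟨k1leK t ht, Kmono t R ht htR⟩, fun h => (hbKt t ht).ne' (by simp [h])⟩
    have rep : ∀ t, r1 ≤ t → t ≤ R →
        gaussNorm b t = S.sup' hSne (fun n => ‖b n‖ * t ^ n) := by
      intro t ht htR
      have htpos : 0 < t := h1.trans_le ht
      have h0sup : (0:ℝ) ≤ S.sup' hSne (fun n => ‖b n‖ * t ^ n) :=
        le_trans (mul_nonneg (norm_nonneg _) (zpow_nonneg htpos.le _))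
          (Finset.le_sup' (fun n => ‖b n‖ * t ^ n) hk1S)
      apply le_antisymm
      · apply Real.sSup_le _ h0sup
        rintro x ⟨n, rfl⟩
        by_cases hn0 : b n = 0
        · simp only [hn0, norm_zero, zero_mul]
          exact h0sup
        · by_cases hlo : n < k1
          · have hr1le : ‖b n‖ * r1 ^ n ≤ ‖b k1‖ * r1 ^ k1 := by
              rw [hk1mem]; exact leG r1 le_rfl n
            exact le_trans (cmpUp h1 ht hlo.le (norm_nonneg _) hr1le)
              (Finset.le_sup' (fun n => ‖b n‖ * t ^ n) hk1S)
          · by_cases hhi : Kf R < n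
            · have hRle : ‖b n‖ * R ^ n ≤ ‖b (Kf R)‖ * R ^ (Kf R) := by
                rw [hKmem R hR]; exact leG R hR n
              exact le_trans (cmpDown htpos htR hhi.le (norm_nonneg _) hRle)
                (Finset.le_sup' (fun n => ‖b n‖ * t ^ n) (hKtS R hR le_rfl))
            · have hnS : n ∈ S := by
                simp only [hS, Finset.mem_filter, Finset.mem_Icc]
                exact ⟨⟨not_lt.1 hlo, not_lt.1 hhi⟩, hn0⟩
              exact Finset.le_sup' (fun n => ‖b n‖ * t ^ n) hnS
      · exact Finset.sup'_le _ _ (fun n _ => leG t ht n)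
    have hcont : ContinuousOn (fun t => Real.log (gaussNorm b t)) (Icc r1 R) := by
      have hc : ∀ t ∈ Icc r1 R,
          ContinuousAt (fun t => Real.log (S.sup' hSne (fun n => ‖b n‖ * t ^ n))) t := by
        intro t ht
        have htpos : 0 < t := h1.trans_le ht.1
        have hsup : ContinuousAt (fun t => S.sup' hSne (fun n => ‖b n‖ * t ^ n)) t := by
          apply ContinuousAt.finset_sup'_apply hSne
          intro n _
          exact continuousAt_const.mul (continuousAt_zpow₀ t n (Or.inl htpos.ne'))
        have hpos : 0 < S.sup' hSne (fun n => ‖b n‖ * t ^ n) :=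
          lt_of_lt_of_le (mul_pos hbk1pos (zpow_pos htpos _))
            (Finset.le_sup' (fun n => ‖b n‖ * t ^ n) hk1S)
        exact ContinuousAt.log hsup hpos.ne'
      refine ContinuousOn.congr (fun t ht => (hc t ht).continuousWithinAt) ?_
      intro t ht
      simp only
      rw [rep t ht.1 ht.2]
    have hderiv : ∀ x ∈ Ioo r1 R, HasDerivWithinAt (fun t => Real.log (gaussNorm b t))
        ((Kf x : ℝ) / x) (Ioi x) x := by
      intro x hx
      have hx1 : r1 ≤ x := hx.1.le
      have hxpos : 0 < x := h1.trans_le hx1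
      have hKS : Kf x ∈ S := hKtS x hx1 hx.2.le
      have hbK : 0 < ‖b (Kf x)‖ := hbKt x hx1
      have hev : ∀ᶠ t in nhdsWithin x (Ioi x),
          Real.log (gaussNorm b t) = Real.log ‖b (Kf x)‖ + (Kf x : ℝ) * Real.log t := by
        have hIoo : Ioo x R ∈ nhdsWithin x (Ioi x) := Ioo_mem_nhdsGT_of_mem ⟨le_rfl, hx.2⟩
        have hterms : ∀ᶠ t in nhdsWithin x (Ioi x), ∀ n ∈ S,
            ‖b n‖ * t ^ n ≤ ‖b (Kf x)‖ * t ^ (Kf x) := by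
          rw [eventually_all_finset]
          intro n hn
          rcases lt_or_ge (‖b n‖ * x ^ n) (gaussNorm b x) with hlt | hge
          · have hcn : ContinuousAt (fun t : ℝ => ‖b n‖ * t ^ n) x :=
              continuousAt_const.mul (continuousAt_zpow₀ x n (Or.inl hxpos.ne'))
            have hcK : ContinuousAt (fun t : ℝ => ‖b (Kf x)‖ * t ^ (Kf x)) x :=
              continuousAt_const.mul (continuousAt_zpow₀ x (Kf x) (Or.inl hxpos.ne'))
            have hval : ‖b n‖ * x ^ n < ‖b (Kf x)‖ * x ^ (Kf x) := by
              rw [hKmem x hx1]; exact hlt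
            exact ((hcn.eventually_lt hcK hval).filter_mono nhdsWithin_le_nhds).mono
              (fun t h => h.le)
          · have heq : ‖b n‖ * x ^ n = gaussNorm b x := le_antisymm (leG x hx1 n) hge
            have hnK : n ≤ Kf x := (hKf x hx1).2 heq
            rcases eq_or_lt_of_le hnK with rfl | hnK'
            · exact Filter.Eventually.of_forall (fun t => le_rfl)
            · have hbase : ‖b n‖ * x ^ n ≤ ‖b (Kf x)‖ * x ^ (Kf x) := by
                rw [heq, hKmem x hx1]
              filter_upwards [self_mem_nhdsWithin] with t ht
              exact (cmpUpStrict hxpos ht hnK' hbK hbase).le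
        filter_upwards [hIoo, hterms] with t ht hterm
        have ht1 : r1 ≤ t := hx1.trans ht.1.le
        have htpos : 0 < t := hxpos.trans ht.1
        have hGt : gaussNorm b t = ‖b (Kf x)‖ * t ^ (Kf x) := by
          rw [rep t ht1 ht.2.le]
          exact le_antisymm (Finset.sup'_le _ _ hterm)
            (Finset.le_sup' (fun n => ‖b n‖ * t ^ n) hKS)
        rw [hGt, Real.log_mul hbK.ne' (zpow_ne_zero _ htpos.ne'), Real.log_zpow]
      have hφ : HasDerivAt (fun t => Real.log ‖b (Kf x)‖ + (Kf x : ℝ) * Real.log t)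
          ((Kf x : ℝ) / x) x := by
        have hd := (Real.hasDerivAt_log hxpos.ne').const_mul (Kf x : ℝ)
        simpa [div_eq_mul_inv] using hd.const_add (Real.log ‖b (Kf x)‖)
      refine (hφ.hasDerivWithinAt).congr_of_eventuallyEq hev ?_
      rw [← hKmem x hx1, Real.log_mul hbK.ne' (zpow_ne_zero _ hxpos.ne'), Real.log_zpow]
    have := intervalIntegral.integral_eq_sub_of_hasDeriv_right
      (f := fun t => Real.log (gaussNorm b t)) (f' := fun t => (Kf t : ℝ) / t)
      (by rw [uIcc_of_le hR]; exact hcont)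
      (by rw [min_eq_left hR, max_eq_right hR]; exact hderiv)
      (hIntKf R hR)
    exact this
  -- splitting the counting integral
  have hsplit : ∀ r, r1 ≤ r → (∫ t in r1..r, ((Kf t - k1 : ℤ) : ℝ) / t) =
      (Real.log (gaussNorm b r) - Real.log (gaussNorm b r1))
        - (k1 : ℝ) * (Real.log r - Real.log r1) := by
    intro r hr
    have hrpos : 0 < r := h1.trans_le hr
    have hi2 : IntervalIntegrable (fun t => (k1 : ℝ) / t) MeasureTheory.volume r1 r := by
      apply ContinuousOn.intervalIntegrable
      rw [uIcc_of_le hr]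
      exact continuousOn_const.div continuousOn_id (fun t ht => (h1.trans_le ht.1).ne')
    have e1 : (∫ t in r1..r, ((Kf t - k1 : ℤ) : ℝ) / t)
        = (∫ t in r1..r, ((Kf t : ℝ) / t - (k1 : ℝ) / t)) := by
      apply intervalIntegral.integral_congr
      intro t _
      push_cast
      ring
    rw [e1, intervalIntegral.integral_sub (hIntKf r hr) hi2, key r hr]
    have e2 : (∫ t in r1..r, (k1 : ℝ) / t) = (k1 : ℝ) * (Real.log r - Real.log r1) := by
      simp only [div_eq_mul_inv]
      rw [intervalIntegral.integral_const_mul, integral_inv_of_pos h1 hrpos,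
        Real.log_div hrpos.ne' h1.ne']
    rw [e2]
  -- constants
  set C1 : ℝ := Real.log (max 1 ‖c‖) with hC1
  have hC1nn : 0 ≤ C1 := Real.log_nonneg (le_max_left _ _)
  set C2 : ℝ := |Real.log (gaussNorm b r1)| with hC2
  set C3 : ℝ := |(k1 : ℝ)| * |Real.log r1| with hC3
  have hC3nn : 0 ≤ C3 := mul_nonneg (abs_nonneg _) (abs_nonneg _)
  have hlog2 : 0 < Real.log 2 := Real.log_pos one_lt_two
  refine ⟨(C1 + C2 + C3) / Real.log 2 + |(k1 : ℝ)| + 1, by positivity, ?_⟩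
  intro r hr
  have hr1 : r1 ≤ r := le_trans (le_max_left _ _) hr
  have hr2 : (2:ℝ) ≤ r := le_trans (le_max_right _ _) hr
  have hrpos : 0 < r := h1.trans_le hr1
  have hlogr : Real.log 2 ≤ Real.log r := Real.log_le_log two_pos hr2
  have hlogrpos : 0 < Real.log r := lt_of_lt_of_le hlog2 hlogr
  -- comparison of gauss norms of a and b
  have hGa0 : 0 ≤ gaussNorm a r :=
    le_trans (mul_nonneg (norm_nonneg _) (zpow_nonneg hrpos.le _)) (leGa r hr1 0)
  have hGb : 0 < gaussNorm b r := Gpos r hr1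
  have hab : gaussNorm a r ≤ max (gaussNorm b r) ‖c‖ := by
    apply Real.sSup_le
    · rintro x ⟨n, rfl⟩
      by_cases hn : n = 0
      · subst hn
        simp only [zpow_zero, mul_one]
        have ha0 : a 0 = b 0 + c := by simp [hbdef, subConst]
        calc ‖a 0‖ ≤ max ‖b 0‖ ‖c‖ := ha0 ▸ IsUltrametricDist.norm_add_le_max _ _
          _ ≤ max (gaussNorm b r) ‖c‖ :=
            max_le_max (by simpa using leG r hr1 0) le_rfl
      · show ‖a n‖ * r ^ n ≤ max (gaussNorm b r) ‖c‖
        rw [← hbeq n hn]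
        exact le_trans (leG r hr1 n) (le_max_left _ _)
    · exact le_trans hGb.le (le_max_left _ _)
  have hba : gaussNorm b r ≤ max (gaussNorm a r) ‖c‖ := by
    apply Real.sSup_le
    · rintro x ⟨n, rfl⟩
      by_cases hn : n = 0
      · subst hn
        simp only [zpow_zero, mul_one]
        have hb0 : b 0 = a 0 + (-c) := by simp [hbdef, subConst]; ring
        calc ‖b 0‖ ≤ max ‖a 0‖ ‖-c‖ := hb0 ▸ IsUltrametricDist.norm_add_le_max _ _
          _ = max ‖a 0‖ ‖c‖ := by rw [norm_neg]
          _ ≤ max (gaussNorm a r) ‖c‖ :=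
            max_le_max (by simpa using leGa r hr1 0) le_rfl
      · show ‖b n‖ * r ^ n ≤ max (gaussNorm a r) ‖c‖
        rw [hbeq n hn]
        exact le_trans (leGa r hr1 n) (le_max_left _ _)
    · exact le_trans (norm_nonneg c) (le_max_right _ _)
  -- |D| ≤ C1 where D = max 0 (log Ga) - max 0 (log Gb)
  have hprod : ∀ x y : ℝ, 0 ≤ x → max 1 (max x ‖c‖) ≤ max 1 x * max 1 ‖c‖ := by
    intro x y hx
    have h1x : (1:ℝ) ≤ max 1 x := le_max_left _ _
    have h1c : (1:ℝ) ≤ max 1 ‖c‖ := le_max_left _ _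
    apply max_le
    · exact one_le_mul_of_one_le_of_one_le h1x h1c
    · apply max_le
      · exact le_trans (le_max_right 1 x) (le_mul_of_one_le_right (by linarith) h1c)
      · exact le_trans (le_max_right 1 ‖c‖) (le_mul_of_one_le_left (by linarith) h1x)
  have hDle : Real.log (max 1 (gaussNorm a r)) ≤ Real.log (max 1 (gaussNorm b r)) + C1 := by
    have step1 : max 1 (gaussNorm a r) ≤ max 1 (max (gaussNorm b r) ‖c‖) :=
      max_le_max le_rfl hab
    have step2 := hprod (gaussNorm b r) 0 hGb.le
    have := Real.log_le_log (by positivity) (le_trans step1 step2)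
    rwa [Real.log_mul (by positivity) (by positivity)] at this
  have hDge : Real.log (max 1 (gaussNorm b r)) ≤ Real.log (max 1 (gaussNorm a r)) + C1 := by
    have step1 : max 1 (gaussNorm b r) ≤ max 1 (max (gaussNorm a r) ‖c‖) :=
      max_le_max le_rfl hba
    have step2 := hprod (gaussNorm a r) 0 hGa0
    have := Real.log_le_log (by positivity) (le_trans step1 step2)
    rwa [Real.log_mul (by positivity) (by positivity)] at this
  have hDabs : |max 0 (Real.log (gaussNorm a r)) - max 0 (Real.log (gaussNorm b r))| ≤ C1 := by
    rw [max0log hGa0, max0log hGb.le]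
    rw [abs_le]
    constructor <;> linarith
  -- assemble
  rw [hsplit r hr1]
  have hmx : max 0 (Real.log (gaussNorm b r)) - max 0 (-Real.log (gaussNorm b r))
      = Real.log (gaussNorm b r) := by
    rcases le_total (Real.log (gaussNorm b r)) 0 with h | h
    · rw [max_eq_left h, max_eq_right (by linarith : (0:ℝ) ≤ -Real.log (gaussNorm b r))]
      ring
    · rw [max_eq_right h, max_eq_left (by linarith : -Real.log (gaussNorm b r) ≤ 0)]
      ring
  have e : max 0 (Real.log (gaussNorm a r)) - max 0 (-Real.log (gaussNorm b r))
      - ((Real.log (gaussNorm b r) - Real.log (gaussNorm b r1))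
          - (k1 : ℝ) * (Real.log r - Real.log r1))
      = (max 0 (Real.log (gaussNorm a r)) - max 0 (Real.log (gaussNorm b r)))
        + Real.log (gaussNorm b r1) + (k1 : ℝ) * (Real.log r - Real.log r1) := by
    linarith
  rw [e]
  have habs1 : |(k1 : ℝ) * (Real.log r - Real.log r1)| ≤ |(k1 : ℝ)| * Real.log r + C3 := by
    rw [abs_mul]
    have : |Real.log r - Real.log r1| ≤ |Real.log r| + |Real.log r1| := abs_sub _ _
    have hlr : |Real.log r| = Real.log r := abs_of_pos hlogrpos
    calc |(k1:ℝ)| * |Real.log r - Real.log r1|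
        ≤ |(k1:ℝ)| * (|Real.log r| + |Real.log r1|) :=
          mul_le_mul_of_nonneg_left this (abs_nonneg _)
      _ = |(k1:ℝ)| * Real.log r + C3 := by rw [hlr, hC3]; ring
  have htotal : |(max 0 (Real.log (gaussNorm a r)) - max 0 (Real.log (gaussNorm b r)))
        + Real.log (gaussNorm b r1) + (k1 : ℝ) * (Real.log r - Real.log r1)|
      ≤ C1 + C2 + (|(k1 : ℝ)| * Real.log r + C3) := by
    calc |(max 0 (Real.log (gaussNorm a r)) - max 0 (Real.log (gaussNorm b r)))
        + Real.log (gaussNorm b r1) + (k1 : ℝ) * (Real.log r - Real.log r1)|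
        ≤ |(max 0 (Real.log (gaussNorm a r)) - max 0 (Real.log (gaussNorm b r)))
            + Real.log (gaussNorm b r1)| + |(k1 : ℝ) * (Real.log r - Real.log r1)| :=
          abs_add_le _ _
      _ ≤ (|max 0 (Real.log (gaussNorm a r)) - max 0 (Real.log (gaussNorm b r))|
            + |Real.log (gaussNorm b r1)|) + |(k1 : ℝ) * (Real.log r - Real.log r1)| := by
          gcongr
          exact abs_add_le _ _
      _ ≤ C1 + C2 + (|(k1 : ℝ)| * Real.log r + C3) := by
          gcongr
  refine le_trans htotal ?_
  have hkey : C1 + C2 + C3 ≤ (C1 + C2 + C3) / Real.log 2 * Real.log r := by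
    rw [div_mul_eq_mul_div, le_div_iff₀ hlog2]
    have hnn : 0 ≤ C1 + C2 + C3 := by positivity
    calc (C1 + C2 + C3) * Real.log 2 ≤ (C1 + C2 + C3) * Real.log r :=
        mul_le_mul_of_nonneg_left hlogr hnn
      _ = (C1 + C2 + C3) * Real.log r := rfl
  nlinarith [hlogrpos, abs_nonneg ((k1:ℝ))]
end
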